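/- arXiv:1807.00754 — 4 statements merged into one kernel-verified Lean document; each statement's English description precedes it below -/
import Mathlib

section
/- Let X ⊂ ℝⁿ be a compact set, λ the restriction of Lebesgue measure to X, and μ, ν nonnegative Borel measures with ν absolutely continuous with respect to λ with density in L^∞. If ∫_X g² dμ ≤ γ · ∫_X g² dλ holds for all polynomials g (for some γ ≥ 0) and μ is absolutely continuous with respect to λ with bounded density h, then h ≤ γ λ-almost everywhere on X. -/
open MeasureTheory ENNReal

lemma mv_sw (n : ℕ) (X : Set (Fin n → ℝ)) (hX : IsCompact X)
    (f : (Fin n → ℝ) → ℝ) (hf : Continuous f) {ε : ℝ} (hε : 0 < ε) :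
    ∃ p : MvPolynomial (Fin n) ℝ, ∀ x ∈ X, |MvPolynomial.eval x p - f x| < ε := by
  haveI : CompactSpace X := isCompact_iff_compactSpace.mp hX
  set coords : Fin n → C(X, ℝ) := fun i => ⟨fun x => (x : Fin n → ℝ) i, (continuous_apply i).comp continuous_subtype_val⟩ with hcoords
  set A : Subalgebra ℝ C(X, ℝ) := (MvPolynomial.aeval coords).range with hA
  have hsep : A.SeparatesPoints := by
    intro x y hxy
    have : ∃ i, (x : Fin n → ℝ) i ≠ (y : Fin n → ℝ) i := by
      by_contra hc
      push_neg at hc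
      exact hxy (Subtype.ext (funext hc))
    obtain ⟨i, hi⟩ := this
    refine ⟨coords i, ⟨MvPolynomial.aeval coords (MvPolynomial.X i), ⟨MvPolynomial.X i, rfl⟩, by simp⟩, hi⟩
  obtain ⟨⟨g, hg⟩, hgb⟩ := ContinuousMap.exists_mem_subalgebra_near_continuous_of_separatesPoints
    A hsep (fun x => f x) (hf.comp continuous_subtype_val) ε hε
  obtain ⟨p, rfl⟩ := hg
  refine ⟨p, fun x hx => ?_⟩
  have hb := hgb ⟨x, hx⟩
  rw [Real.norm_eq_abs] at hb
  -- aeval coords p ⟨x,hx⟩ = eval x p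
  have : (ContinuousMap.evalAlgHom ℝ ℝ (⟨x, hx⟩ : X)).comp (MvPolynomial.aeval coords)
      = MvPolynomial.aeval (fun i => x i) := by
    apply MvPolynomial.algHom_ext
    intro i
    simp [coords]
  have h2 := congrArg (fun φ => φ p) this
  simp only [AlgHom.comp_apply, ContinuousMap.evalAlgHom_apply] at h2
  have h3 : MvPolynomial.aeval (fun i => x i) p = MvPolynomial.eval x p := by
    rw [MvPolynomial.aeval_def, Algebra.algebraMap_self, ← MvPolynomial.coe_eval₂Hom]; rfl
  calc |MvPolynomial.eval x p - f x| = |((MvPolynomial.aeval coords) p : C(X,ℝ)) ⟨x, hx⟩ - f x| := by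
        rw [h2, h3]
    _ < ε := hb

lemma cont_dom (n : ℕ) (X : Set (Fin n → ℝ)) (hX : IsCompact X)
    (γ : ℝ) (hγ : 0 ≤ γ)
    (h : (Fin n → ℝ) → ℝ) (hh0 : ∀ x, 0 ≤ h x) (hhm : Measurable h)
    (hbd : ∃ C : ℝ, ∀ x, h x ≤ C)
    (hdom : ∀ g : MvPolynomial (Fin n) ℝ,
      ∫ x in X, (MvPolynomial.eval x g) ^ 2 * h x
        ≤ γ * ∫ x in X, (MvPolynomial.eval x g) ^ 2)
    (f : (Fin n → ℝ) → ℝ) (hf : Continuous f) (hf0 : ∀ x, 0 ≤ f x) :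
    ∫ x in X, f x * h x ≤ γ * ∫ x in X, f x := by
  have measX : MeasurableSet X := hX.isClosed.measurableSet
  have volX : volume X ≠ ∞ := hX.measure_lt_top.ne
  obtain ⟨C, hC⟩ := hbd
  have hC0 : 0 ≤ C := (hh0 0).trans (hC 0)
  obtain ⟨Mf, hMf⟩ := hX.exists_bound_of_continuousOn hf.continuousOn
  have hVol0 : 0 ≤ (volume X).toReal := ENNReal.toReal_nonneg
  -- integrability of products with h
  have intmul : ∀ (g : (Fin n → ℝ) → ℝ), Continuous g →
      IntegrableOn (fun x => g x * h x) X volume := by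
    intro g hg
    obtain ⟨Mg, hMg⟩ := hX.exists_bound_of_continuousOn hg.continuousOn
    refine Measure.integrableOn_of_bounded volX
      ((hg.measurable.mul hhm).aestronglyMeasurable) (M := Mg * C) ?_
    refine (ae_restrict_iff' measX).2 (Filter.Eventually.of_forall fun x hx => ?_)
    rw [norm_mul]
    have h1 : ‖g x‖ ≤ Mg := hMg x hx
    have h2 : ‖h x‖ ≤ C := by rw [Real.norm_eq_abs, abs_of_nonneg (hh0 x)]; exact hC x
    exact mul_le_mul h1 h2 (norm_nonneg _) ((norm_nonneg _).trans h1)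
  refine le_of_forall_pos_le_add fun ε hε => ?_
  obtain ⟨K, hKpos, hKge⟩ : ∃ K : ℝ, 0 < K ∧ γ * (volume X).toReal ≤ K :=
    ⟨γ * (volume X).toReal + 1, by positivity, by linarith⟩
  obtain ⟨ε₁, hε₁pos, hε₁le1, hε₁K⟩ : ∃ e : ℝ, 0 < e ∧ e ≤ 1 ∧ 3 * e * K ≤ ε := by
    refine ⟨min (ε / (3 * K)) 1, lt_min (by positivity) one_pos, min_le_right _ _, ?_⟩
    have h1 : min (ε / (3 * K)) 1 ≤ ε / (3 * K) := min_le_left _ _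
    rw [le_div_iff₀ (by positivity)] at h1
    nlinarith
  set u : (Fin n → ℝ) → ℝ := fun x => Real.sqrt (f x + ε₁) with hu
  have hucont : Continuous u := Real.continuous_sqrt.comp (hf.add continuous_const)
  set Mu : ℝ := Real.sqrt (Mf + ε₁) with hMu
  have hMu0 : 0 ≤ Mu := Real.sqrt_nonneg _
  have huMu : ∀ x ∈ X, u x ≤ Mu := by
    intro x hx
    apply Real.sqrt_le_sqrt
    have := hMf x hx
    rw [Real.norm_eq_abs, abs_of_nonneg (hf0 x)] at this
    linarith
  obtain ⟨δ, hδpos, hδε₁, hδMu2⟩ : ∃ d : ℝ, 0 < d ∧ d ≤ ε₁ ∧ 2 * d * Mu ≤ ε₁ := by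
    refine ⟨min (ε₁ / (2 * (Mu + 1))) ε₁, lt_min (by positivity) hε₁pos, min_le_right _ _, ?_⟩
    have h1 : min (ε₁ / (2 * (Mu + 1))) ε₁ ≤ ε₁ / (2 * (Mu + 1)) := min_le_left _ _
    rw [le_div_iff₀ (by positivity)] at h1
    nlinarith [lt_min (by positivity : (0:ℝ) < ε₁ / (2 * (Mu + 1))) hε₁pos]
  obtain ⟨p, hp⟩ := mv_sw n X hX u hucont hδpos
  -- pointwise bounds on X
  have key : ∀ x ∈ X, f x ≤ (MvPolynomial.eval x p) ^ 2 ∧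
      (MvPolynomial.eval x p) ^ 2 ≤ f x + 3 * ε₁ := by
    intro x hx
    have hpx := hp x hx
    rw [abs_sub_lt_iff] at hpx
    have hux : u x ^ 2 = f x + ε₁ := Real.sq_sqrt (by linarith [hf0 x])
    have hux0 : 0 ≤ u x := Real.sqrt_nonneg _
    have huxMu := huMu x hx
    have hδMu : 2 * δ * Mu ≤ ε₁ := hδMu2
    have hδu : δ ≤ Real.sqrt ε₁ := by
      have h1 : δ ≤ ε₁ := hδε₁
      have h2 : ε₁ ≤ Real.sqrt ε₁ := by
        nlinarith [Real.sq_sqrt hε₁pos.le, Real.sqrt_nonneg ε₁,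
          Real.sqrt_le_sqrt hε₁le1, Real.sqrt_one]
      linarith
    have huδ : δ ≤ u x := by
      have : Real.sqrt ε₁ ≤ u x := Real.sqrt_le_sqrt (by linarith [hf0 x])
      linarith
    constructor
    · nlinarith [hpx.1, hpx.2]
    · have hδ2 : δ ^ 2 ≤ ε₁ := by nlinarith
      nlinarith [hpx.1, hpx.2]
  -- integrability
  have intfh := intmul f hf
  have intp2 : IntegrableOn (fun x => (MvPolynomial.eval x p) ^ 2) X volume :=
    ((MvPolynomial.continuous_eval (p := p)).pow 2).continuousOn.integrableOn_compact hX
  have intp2h := intmul (fun x => (MvPolynomial.eval x p) ^ 2)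
    ((MvPolynomial.continuous_eval (p := p)).pow 2)
  have intf : IntegrableOn f X volume := hf.continuousOn.integrableOn_compact hX
  have step1 : ∫ x in X, f x * h x ≤ ∫ x in X, (MvPolynomial.eval x p) ^ 2 * h x := by
    refine setIntegral_mono_on intfh intp2h measX fun x hx => ?_
    exact mul_le_mul_of_nonneg_right (key x hx).1 (hh0 x)
  have step3 : ∫ x in X, (MvPolynomial.eval x p) ^ 2
      ≤ (∫ x in X, f x) + 3 * ε₁ * (volume X).toReal := by
    have : ∫ x in X, (MvPolynomial.eval x p) ^ 2 ≤ ∫ x in X, (f x + 3 * ε₁) := by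
      refine setIntegral_mono_on intp2 (intf.add (integrableOn_const volX))
        measX fun x hx => (key x hx).2
    rw [integral_add intf (integrableOn_const volX)] at this
    simpa [setIntegral_const, mul_comm, Measure.real] using this
  have hfinal : γ * ((∫ x in X, f x) + 3 * ε₁ * (volume X).toReal)
      ≤ γ * (∫ x in X, f x) + ε := by
    nlinarith [hKge, hε₁K, hε₁pos.le, hVol0, hγ]
  calc ∫ x in X, f x * h x ≤ ∫ x in X, (MvPolynomial.eval x p) ^ 2 * h x := step1
    _ ≤ γ * ∫ x in X, (MvPolynomial.eval x p) ^ 2 := hdom p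
    _ ≤ γ * ((∫ x in X, f x) + 3 * ε₁ * (volume X).toReal) :=
        mul_le_mul_of_nonneg_left step3 hγ
    _ ≤ γ * (∫ x in X, f x) + ε := hfinal

theorem stmt3 (n : ℕ) (X : Set (Fin n → ℝ)) (hX : IsCompact X)
    (γ : ℝ) (hγ : 0 ≤ γ)
    (h : (Fin n → ℝ) → ℝ) (hh0 : ∀ x, 0 ≤ h x) (hhm : Measurable h)
    (hbd : ∃ C : ℝ, ∀ x, h x ≤ C)
    (hdom : ∀ g : MvPolynomial (Fin n) ℝ,
      ∫ x in X, (MvPolynomial.eval x g) ^ 2 * h x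
        ≤ γ * ∫ x in X, (MvPolynomial.eval x g) ^ 2) :
    ∀ᵐ x ∂(volume.restrict X), h x ≤ γ := by
  have measX : MeasurableSet X := hX.isClosed.measurableSet
  have volX : volume X ≠ ∞ := hX.measure_lt_top.ne
  obtain ⟨C, hC⟩ := hbd
  have hC0 : 0 ≤ C := (hh0 0).trans (hC 0)
  set lam : Measure (Fin n → ℝ) := volume.restrict X with hlam
  haveI hlamfin : IsFiniteMeasure lam := by
    constructor
    rw [hlam, Measure.restrict_apply_univ]
    exact volX.lt_top
  have hohm : Measurable fun x => ENNReal.ofReal (h x) := hhm.ennreal_ofReal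
  set μ : Measure (Fin n → ℝ) := lam.withDensity (fun x => ENNReal.ofReal (h x)) with hμdef
  set ν : Measure (Fin n → ℝ) := (ENNReal.ofReal γ) • lam with hνdef
  haveI hνfin : IsFiniteMeasure ν := by
    constructor
    rw [hνdef, Measure.smul_apply, smul_eq_mul]
    exact ENNReal.mul_lt_top ENNReal.ofReal_lt_top (measure_lt_top lam _)
  haveI hμfin : IsFiniteMeasure μ := by
    constructor
    rw [hμdef, withDensity_apply _ MeasurableSet.univ, Measure.restrict_univ]
    calc ∫⁻ x, ENNReal.ofReal (h x) ∂lam ≤ ∫⁻ _, ENNReal.ofReal C ∂lam :=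
          lintegral_mono fun x => ENNReal.ofReal_le_ofReal (hC x)
      _ = ENNReal.ofReal C * lam Set.univ := by rw [lintegral_const]
      _ < ∞ := ENNReal.mul_lt_top ENNReal.ofReal_lt_top (measure_lt_top lam _)
  -- integrability helper
  have intmul : ∀ (g : (Fin n → ℝ) → ℝ), Continuous g →
      IntegrableOn (fun x => g x * h x) X volume := by
    intro g hg
    obtain ⟨Mg, hMg⟩ := hX.exists_bound_of_continuousOn hg.continuousOn
    refine Measure.integrableOn_of_bounded volX
      ((hg.measurable.mul hhm).aestronglyMeasurable) (M := Mg * C) ?_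
    refine (ae_restrict_iff' measX).2 (Filter.Eventually.of_forall fun x hx => ?_)
    rw [norm_mul]
    have h1 : ‖g x‖ ≤ Mg := hMg x hx
    have h2 : ‖h x‖ ≤ C := by rw [Real.norm_eq_abs, abs_of_nonneg (hh0 x)]; exact hC x
    exact mul_le_mul h1 h2 (norm_nonneg _) ((norm_nonneg _).trans h1)
  -- step: bounded continuous comparison
  have hbc : ∀ f : BoundedContinuousFunction (Fin n → ℝ) NNReal, ∫⁻ x, f x ∂μ ≤ ∫⁻ x, f x ∂ν := by
    intro f
    have hfc : Continuous fun x => ((f x : ℝ)) := NNReal.continuous_coe.comp f.continuous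
    have hf0 : ∀ x, (0:ℝ) ≤ (f x : ℝ) := fun x => (f x).coe_nonneg
    have hint : IntegrableOn (fun x => (f x : ℝ) * h x) X volume := intmul _ hfc
    have hintf : IntegrableOn (fun x => (f x : ℝ)) X volume :=
      hfc.continuousOn.integrableOn_compact hX
    have hL : ∫⁻ x, f x ∂μ = ENNReal.ofReal (∫ x in X, (f x : ℝ) * h x) := by
      rw [hμdef, lintegral_withDensity_eq_lintegral_mul lam hohm
        (show Measurable fun x => ((f x : ℝ≥0∞)) from
          measurable_coe_nnreal_ennreal.comp f.continuous.measurable)]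
      rw [ofReal_integral_eq_lintegral_ofReal hint
        (Filter.Eventually.of_forall fun x => mul_nonneg (hf0 x) (hh0 x))]
      congr 1
      funext x
      simp only [Pi.mul_apply]
      rw [ENNReal.ofReal_mul (hf0 x), ENNReal.ofReal_coe_nnreal, mul_comm]
    have hR : ∫⁻ x, f x ∂ν = ENNReal.ofReal (γ * ∫ x in X, (f x : ℝ)) := by
      rw [hνdef, lintegral_smul_measure, ENNReal.ofReal_mul hγ]
      congr 1
      rw [ofReal_integral_eq_lintegral_ofReal hintf
        (Filter.Eventually.of_forall fun x => hf0 x)]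
      simp [ENNReal.ofReal_coe_nnreal]
      rfl
    rw [hL, hR]
    exact ENNReal.ofReal_le_ofReal
      (cont_dom n X hX γ hγ h hh0 hhm ⟨C, hC⟩ hdom _ hfc hf0)
  -- step: closed sets
  have hclosed : ∀ F : Set (Fin n → ℝ), IsClosed F → μ F ≤ ν F := by
    intro F hF
    have obsμ := HasOuterApproxClosed.tendsto_lintegral_apprSeq hF μ
    have obsν := HasOuterApproxClosed.tendsto_lintegral_apprSeq hF ν
    exact le_of_tendsto_of_tendsto' obsμ obsν fun k => hbc (hF.apprSeq k)
  -- step: all measurable sets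
  have hle : ∀ s : Set (Fin n → ℝ), MeasurableSet s → μ s ≤ ν s := by
    intro s hs
    refine ENNReal.le_of_forall_pos_le_add fun ε hε _ => ?_
    obtain ⟨F, hFs, hFc, hμF⟩ := hs.exists_isClosed_lt_add (μ := μ)
      (measure_ne_top μ s) (by exact_mod_cast hε.ne' : (ε : ℝ≥0∞) ≠ 0)
    calc μ s ≤ μ F + ε := hμF.le
      _ ≤ ν F + ε := add_le_add_left (hclosed F hFc) _
      _ ≤ ν s + ε := add_le_add_left (measure_mono hFs) _
  -- conclude
  have key : (fun x => ENNReal.ofReal (h x)) ≤ᵐ[lam] fun _ => ENNReal.ofReal γ := by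
    refine ae_le_of_forall_setLIntegral_le_of_sigmaFinite hohm fun s hs _ => ?_
    have h1 : ∫⁻ x in s, ENNReal.ofReal (h x) ∂lam = μ s := (withDensity_apply _ hs).symm
    have h2 : ∫⁻ _ in s, ENNReal.ofReal γ ∂lam = ν s := by
      rw [setLIntegral_const, hνdef, Measure.smul_apply, smul_eq_mul]
    rw [h1, h2]
    exact hle s hs
  filter_upwards [key] with x hx
  exact (ENNReal.ofReal_le_ofReal_iff hγ).mp hx
end

section
/- Let μ be a finite nonnegative Borel measure on a compact set X ⊂ ℝⁿ whose moment matrix M_r(u) of order r is positive definite, and let g(x) = Ax + b be an invertible affine map of ℝⁿ. Then the pushforward measure μ̃ = g_#μ has positive definite moment matrix of order r, and the Christoffel polynomials satisfy p_{μ̃, r}(A x + b) = p_{μ, r}(x) for all x ∈ X, where p_{μ,r}(x) = v_r(x)ᵀ M_r(u)⁻¹ v_r(x) and v_r(x) is the vector of all monomials of degree at most r. -/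
open MeasureTheory Matrix MvPolynomial

/-- Index set for monomials of degree at most `r` in `n` variables. -/
abbrev Idx (n r : ℕ) := {α : Fin n → Fin (r + 1) // ∑ i, (α i : ℕ) ≤ r}

/-- The vector of all monomials of degree at most `r` evaluated at `x`. -/
def vmon (n r : ℕ) (x : Fin n → ℝ) : Idx n r → ℝ := fun a => ∏ i, x i ^ (a.1 i : ℕ)

/-- The order-`r` moment matrix of a measure `μ`. -/
noncomputable def momMat (n r : ℕ) (μ : Measure (Fin n → ℝ)) :
    Matrix (Idx n r) (Idx n r) ℝ :=
  fun a b => ∫ x, vmon n r x a * vmon n r x b ∂μ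

/-- The Christoffel polynomial `p_{μ,r}(x) = v_r(x)ᵀ M_r(u)⁻¹ v_r(x)`. -/
noncomputable def christoffel (n r : ℕ) (μ : Measure (Fin n → ℝ))
    (x : Fin n → ℝ) : ℝ :=
  dotProduct (vmon n r x) ((momMat n r μ)⁻¹.mulVec (vmon n r x))


lemma vmon_continuous (n r : ℕ) (a : Idx n r) : Continuous fun x => vmon n r x a := by
  unfold vmon
  exact continuous_finset_prod _ fun i _ => (continuous_apply i).pow _

noncomputable def ιIdx (n r : ℕ) (c : Idx n r) : Fin n →₀ ℕ :=
  Finsupp.equivFunOnFinite.symm fun i => (c.1 i : ℕ)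

@[simp] lemma ιIdx_apply (n r : ℕ) (c : Idx n r) (i : Fin n) : ιIdx n r c i = (c.1 i : ℕ) := rfl

lemma ιIdx_inj (n r : ℕ) : Function.Injective (ιIdx n r) := by
  intro c d h
  apply Subtype.ext
  funext i
  have := congrArg (fun f => f i) h
  simpa [ιIdx, Fin.val_injective.eq_iff] using this

noncomputable def affPoly (n : ℕ) (A : Matrix (Fin n) (Fin n) ℝ) (b : Fin n → ℝ) (i : Fin n) :
    MvPolynomial (Fin n) ℝ :=
  (∑ j, MvPolynomial.C (A i j) * MvPolynomial.X j) + MvPolynomial.C (b i)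

noncomputable def Gmat (n r : ℕ) (A : Matrix (Fin n) (Fin n) ℝ) (b : Fin n → ℝ) :
    Matrix (Idx n r) (Idx n r) ℝ :=
  fun a c => MvPolynomial.coeff (ιIdx n r c) (∏ i, (affPoly n A b i) ^ (a.1 i : ℕ))

lemma affPoly_totalDegree (n : ℕ) (A : Matrix (Fin n) (Fin n) ℝ) (b : Fin n → ℝ) (i : Fin n) :
    (affPoly n A b i).totalDegree ≤ 1 := by
  unfold affPoly
  refine (totalDegree_add _ _).trans (max_le ?_ (by simp [totalDegree_C]))
  refine (totalDegree_finset_sum _ _).trans (Finset.sup_le fun j _ => ?_)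
  refine (totalDegree_mul _ _).trans ?_
  simp [totalDegree_C, totalDegree_X]

lemma vmon_affine (n r : ℕ) (A : Matrix (Fin n) (Fin n) ℝ) (b : Fin n → ℝ) (x : Fin n → ℝ) :
    vmon n r (A.mulVec x + b) = (Gmat n r A b).mulVec (vmon n r x) := by
  funext a
  set P : MvPolynomial (Fin n) ℝ := ∏ i, (affPoly n A b i) ^ (a.1 i : ℕ) with hP
  have hdeg : P.totalDegree ≤ r := by
    refine (totalDegree_finset_prod _ _).trans ?_
    refine le_trans (Finset.sum_le_sum fun i _ => ?_) a.2
    refine (totalDegree_pow _ _).trans ?_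
    have := affPoly_totalDegree n A b i
    calc (a.1 i : ℕ) * (affPoly n A b i).totalDegree ≤ (a.1 i : ℕ) * 1 :=
          Nat.mul_le_mul_left _ this
      _ = (a.1 i : ℕ) := Nat.mul_one _
  have heval : MvPolynomial.eval x P = vmon n r (A.mulVec x + b) a := by
    simp [hP, vmon, affPoly, Matrix.mulVec, dotProduct]
  have hsub : P.support ⊆ Finset.univ.image (ιIdx n r) := by
    intro d hd
    have hsum : (d.sum fun _ e => e) ≤ r := le_trans (le_totalDegree hd) hdeg
    have hle : ∀ i, d i ≤ d.sum fun _ e => e := by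
      intro i
      by_cases h : i ∈ d.support
      · exact Finset.single_le_sum (fun _ _ => Nat.zero_le _) h
      · simp [Finsupp.notMem_support_iff.mp h]
    have hsum' : ∑ i, d i ≤ r := by
      rwa [Finsupp.sum_fintype _ _ (fun _ => rfl)] at hsum
    refine Finset.mem_image.2 ⟨⟨fun i => ⟨d i, Nat.lt_succ_of_le (le_trans (hle i) hsum)⟩, ?_⟩,
      Finset.mem_univ _, ?_⟩
    · simpa using hsum'
    · apply Finsupp.ext; intro i; simp [ιIdx]
  have hsum : MvPolynomial.eval x P = ∑ c : Idx n r,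
      MvPolynomial.coeff (ιIdx n r c) P * ∏ i, x i ^ (c.1 i : ℕ) := by
    rw [MvPolynomial.eval_eq']
    rw [Finset.sum_subset hsub (fun d _ hd => by
      simp [MvPolynomial.notMem_support_iff.mp hd])]
    rw [Finset.sum_image (fun c _ d _ h => ιIdx_inj n r h)]
    exact Finset.sum_congr rfl fun c _ => by simp
  rw [← heval, hsum]
  simp only [Matrix.mulVec, dotProduct, Gmat, vmon]
  rfl


section Key
variable {n r : ℕ} {X : Set (Fin n → ℝ)} {μ : Measure (Fin n → ℝ)}

lemma integ_of_continuous (hX : IsCompact X) [IsFiniteMeasure μ] (hsupp : μ Xᶜ = 0)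
    {f : (Fin n → ℝ) → ℝ} (hf : Continuous f) : Integrable f μ := by
  obtain ⟨C, hC⟩ := hX.exists_bound_of_continuousOn hf.continuousOn
  have hae : ∀ᵐ x ∂μ, x ∈ X := by
    rw [MeasureTheory.ae_iff]
    exact hsupp
  exact (integrable_const C).mono' hf.aestronglyMeasurable (hae.mono fun x hx => hC x hx)

lemma key_integral (hX : IsCompact X) [IsFiniteMeasure μ] (hsupp : μ Xᶜ = 0)
    (c1 c2 : Idx n r → ℝ) :
    ∫ x, (dotProduct c1 (vmon n r x)) * (dotProduct c2 (vmon n r x)) ∂μ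
      = dotProduct c1 ((momMat n r μ).mulVec c2) := by
  have hint : ∀ b d : Idx n r,
      Integrable (fun x => (c1 b * vmon n r x b) * (c2 d * vmon n r x d)) μ := by
    intro b d
    have : Continuous fun x => (c1 b * vmon n r x b) * (c2 d * vmon n r x d) :=
      (continuous_const.mul (vmon_continuous n r b)).mul
        (continuous_const.mul (vmon_continuous n r d))
    exact integ_of_continuous hX hsupp this
  simp only [dotProduct, Finset.sum_mul_sum]
  rw [MeasureTheory.integral_finset_sum _ (fun b _ => integrable_finset_sum _ (fun d _ => hint b d))]
  have : ∀ b : Idx n r, (∫ x, ∑ d, (c1 b * vmon n r x b) * (c2 d * vmon n r x d) ∂μ)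
      = ∑ d, c1 b * c2 d * (momMat n r μ b d) := by
    intro b
    rw [MeasureTheory.integral_finset_sum _ (fun d _ => hint b d)]
    refine Finset.sum_congr rfl fun d _ => ?_
    have : ∀ x, (c1 b * vmon n r x b) * (c2 d * vmon n r x d)
        = (c1 b * c2 d) * (vmon n r x b * vmon n r x d) := fun x => by ring
    simp only [this]
    rw [MeasureTheory.integral_const_mul]
    rfl
  simp only [this, Matrix.mulVec, dotProduct, Finset.mul_sum]
  exact Finset.sum_congr rfl fun b _ => Finset.sum_congr rfl fun d _ => by ring

end Key

theorem stmt13 (n r : ℕ) (X : Set (Fin n → ℝ)) (hX : IsCompact X)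
    (μ : Measure (Fin n → ℝ)) [IsFiniteMeasure μ] (hsupp : μ Xᶜ = 0)
    (A : Matrix (Fin n) (Fin n) ℝ) (hA : IsUnit A.det) (b : Fin n → ℝ)
    (hM : (momMat n r μ).PosDef) :
    (momMat n r (μ.map fun x => A.mulVec x + b)).PosDef ∧
      ∀ x ∈ X, christoffel n r (μ.map fun x => A.mulVec x + b) (A.mulVec x + b)
        = christoffel n r μ x := by
  set g : (Fin n → ℝ) → (Fin n → ℝ) := fun x => A.mulVec x + b with hg_def
  set G := Gmat n r A b with hG_def
  set H := Gmat n r A⁻¹ (-(A⁻¹.mulVec b)) with hH_def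
  set M := momMat n r μ with hM_def
  have hg_cont : Continuous g := by
    refine Continuous.add ?_ continuous_const
    exact (Matrix.mulVecLin A).continuous_of_finiteDimensional
  -- inverse affine map
  have hginv : ∀ x, A⁻¹.mulVec (g x) + (-(A⁻¹.mulVec b)) = x := by
    intro x
    simp only [hg_def, Matrix.mulVec_add, Matrix.mulVec_mulVec,
      Matrix.nonsing_inv_mul A hA, Matrix.one_mulVec]
    abel
  have hHG : ∀ x, vmon n r x = (H * G).mulVec (vmon n r x) := by
    intro x
    have h1 : vmon n r (g x) = G.mulVec (vmon n r x) := vmon_affine n r A b x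
    have h2 : vmon n r x = H.mulVec (vmon n r (g x)) := by
      have h2' := vmon_affine n r A⁻¹ (-(A⁻¹.mulVec b)) (g x)
      rw [hginv x] at h2'
      exact h2'
    conv_lhs => rw [h2, h1]
    rw [Matrix.mulVec_mulVec]
  have hK : ∀ x, (H * G - 1).mulVec (vmon n r x) = 0 := by
    intro x
    rw [Matrix.sub_mulVec, Matrix.one_mulVec, ← hHG x, sub_self]
  have hMdet : IsUnit M.det := (Matrix.isUnit_iff_isUnit_det M).mp hM.isUnit
  have hMK : M * (H * G - 1)ᵀ = 0 := by
    ext a c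
    have hkey := key_integral hX hsupp (Pi.single a 1) ((H * G - 1) c)
    have h0 : ∀ x : Fin n → ℝ, dotProduct ((H * G - 1) c) (vmon n r x) = 0 :=
      fun x => congrFun (hK x) c
    simp only [h0, mul_zero, integral_zero] at hkey
    have h2 : (M.mulVec ((H * G - 1) c)) a = 0 := by
      have h2' := hkey.symm
      rwa [single_dotProduct, one_mul] at h2'
    have h3 : ((M * (H * G - 1)ᵀ : Matrix (Idx n r) (Idx n r) ℝ)) a c = (M.mulVec ((H * G - 1) c)) a := by
      simp only [Matrix.mul_apply, Matrix.mulVec, dotProduct, Matrix.transpose_apply]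
    rw [Matrix.zero_apply, h3]
    exact h2
  have hHG1 : H * G = 1 := by
    have hT : (H * G - 1)ᵀ = 0 := by
      calc (H * G - 1)ᵀ = M⁻¹ * (M * (H * G - 1)ᵀ) := by
            rw [← Matrix.mul_assoc, Matrix.nonsing_inv_mul _ hMdet, Matrix.one_mul]
        _ = 0 := by rw [hMK, Matrix.mul_zero]
    exact sub_eq_zero.mp (Matrix.transpose_eq_zero.mp hT)
  have hGdet : IsUnit G.det := Matrix.isUnit_det_of_left_inverse hHG1
  have hGtdet : IsUnit Gᵀ.det := by rwa [Matrix.det_transpose]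
  -- pushforward moment matrix
  have hMt : momMat n r (μ.map g) = G * M * Gᵀ := by
    ext a c
    have hstep1 : momMat n r (μ.map g) a c = ∫ x, vmon n r (g x) a * vmon n r (g x) c ∂μ := by
      unfold momMat
      exact integral_map hg_cont.aemeasurable
        (((vmon_continuous n r a).mul (vmon_continuous n r c)).aestronglyMeasurable)
    have hstep2 : ∀ x, vmon n r (g x) a * vmon n r (g x) c
        = (dotProduct (G a) (vmon n r x)) * (dotProduct (G c) (vmon n r x)) := by
      intro x
      have h1 : vmon n r (g x) = G.mulVec (vmon n r x) := vmon_affine n r A b x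
      rw [h1]; rfl
    rw [hstep1]
    simp only [hstep2]
    rw [key_integral hX hsupp]
    simp only [Matrix.mul_apply, Matrix.mulVec, dotProduct, Matrix.transpose_apply,
      Finset.mul_sum, Finset.sum_mul]
    rw [Finset.sum_comm]
    exact Finset.sum_congr rfl fun d _ => Finset.sum_congr rfl fun e _ => by ring
  constructor
  · -- positive definiteness
    rw [hMt]
    refine Matrix.PosDef.of_dotProduct_mulVec_pos ?_ ?_
    · have h1 : Mᴴ = M := hM.1
      calc (G * M * Gᵀ)ᴴ = (Gᵀ)ᴴ * (Mᴴ * Gᴴ) := by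
            rw [Matrix.conjTranspose_mul, Matrix.conjTranspose_mul]
        _ = G * M * Gᵀ := by
            rw [h1, Matrix.conjTranspose_eq_transpose_of_trivial,
              Matrix.conjTranspose_eq_transpose_of_trivial, Matrix.transpose_transpose,
              Matrix.mul_assoc]
    · intro x hx
      have hy : Gᵀ.mulVec x ≠ 0 := by
        intro h
        apply hx
        have : ((Gᵀ)⁻¹ * Gᵀ).mulVec x = (Gᵀ)⁻¹.mulVec (Gᵀ.mulVec x) := (Matrix.mulVec_mulVec _ _ _).symm
        rw [Matrix.nonsing_inv_mul _ hGtdet, Matrix.one_mulVec, h, Matrix.mulVec_zero] at this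
        exact this
      have := hM.dotProduct_mulVec_pos hy
      have heq : dotProduct (star x) ((G * M * Gᵀ).mulVec x)
          = dotProduct (star (Gᵀ.mulVec x)) (M.mulVec (Gᵀ.mulVec x)) := by
        simp only [star_trivial]
        rw [← Matrix.mulVec_mulVec, ← Matrix.mulVec_mulVec, dotProduct_mulVec,
          ← Matrix.mulVec_transpose]
      rw [heq]
      exact this
  · -- Christoffel invariance
    intro x _
    show dotProduct (vmon n r (g x)) ((momMat n r (μ.map g))⁻¹.mulVec (vmon n r (g x)))
      = dotProduct (vmon n r x) (M⁻¹.mulVec (vmon n r x))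
    have h1 : vmon n r (g x) = G.mulVec (vmon n r x) := vmon_affine n r A b x
    rw [hMt, h1, Matrix.mul_inv_rev, Matrix.mul_inv_rev]
    have e1 : ((Gᵀ)⁻¹ * (M⁻¹ * G⁻¹)).mulVec (G.mulVec (vmon n r x))
        = (Gᵀ)⁻¹.mulVec (M⁻¹.mulVec (vmon n r x)) := by
      rw [Matrix.mulVec_mulVec, Matrix.mul_assoc, Matrix.mul_assoc,
        Matrix.nonsing_inv_mul _ hGdet, Matrix.mul_one, ← Matrix.mulVec_mulVec]
    rw [e1, dotProduct_comm, dotProduct_mulVec, ← Matrix.mulVec_transpose,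
      Matrix.mulVec_mulVec, Matrix.mul_nonsing_inv _ hGtdet, Matrix.one_mulVec,
      dotProduct_comm]
end

section
/- The function h*(x) = 2/(1+x)² is an invariant probability density for the piecewise map f on [0,1] defined by f(x) = 2x/(1−x) for x ∈ [0, 1/3] and f(x) = (1−x)/(2x) for x ∈ [1/3, 1]; that is, the probability measure dμ = h* dλ satisfies f_#μ = μ. -/
open MeasureTheory Set

private lemma key_lint (a b : ℝ) (ha : 0 ≤ a) (hab : a ≤ b) :
    ∫⁻ x in Icc a b, ENNReal.ofReal (2 / (1 + x) ^ 2)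
      = ENNReal.ofReal (2 / (1 + a) - 2 / (1 + b)) := by
  have hcont : ContinuousOn (fun x : ℝ => 2 / (1 + x) ^ 2) (Icc a b) := by
    apply ContinuousOn.div continuousOn_const (by fun_prop)
    intro x hx
    have h1 : (0:ℝ) < 1 + x := by
      have := hx.1; linarith
    exact pow_ne_zero 2 (ne_of_gt h1)
  have hint : IntegrableOn (fun x : ℝ => 2 / (1 + x) ^ 2) (Icc a b) :=
    hcont.integrableOn_compact isCompact_Icc
  rw [← ofReal_integral_eq_lintegral_ofReal hint
      (Filter.Eventually.of_forall fun x => by positivity)]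
  congr 1
  rw [MeasureTheory.integral_Icc_eq_integral_Ioc, ← intervalIntegral.integral_of_le hab]
  have hFTC := intervalIntegral.integral_eq_sub_of_hasDerivAt
      (f := fun y : ℝ => -2 / (1 + y)) (f' := fun x : ℝ => 2 / (1 + x) ^ 2)
      (a := a) (b := b) ?_ ?_
  · rw [hFTC]; ring
  · intro x hx
    rw [uIcc_of_le hab] at hx
    have hx0 : (0:ℝ) < 1 + x := by have := hx.1; linarith
    have h := (hasDerivAt_const x (-2 : ℝ)).div
      ((hasDerivAt_id x).const_add 1) (ne_of_gt hx0)
    convert h using 1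
    · rfl
    · rfl
    · simp
  · have := hcont.mono (by rw [uIcc_of_le hab] : uIcc a b ⊆ Icc a b)
    exact this.intervalIntegrable

private lemma mu_apply (s : Set ℝ) (hs : MeasurableSet s) :
    ((volume.restrict (Icc (0:ℝ) 1)).withDensity
        (fun x => ENNReal.ofReal (2 / (1 + x) ^ 2))) s
      = ∫⁻ x in s ∩ Icc (0:ℝ) 1, ENNReal.ofReal (2 / (1 + x) ^ 2) := by
  rw [withDensity_apply _ hs, Measure.restrict_restrict hs]

theorem stmt18 :
    IsProbabilityMeasure
      ((volume.restrict (Set.Icc (0:ℝ) 1)).withDensity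
        (fun x => ENNReal.ofReal (2 / (1 + x) ^ 2))) ∧
    ((volume.restrict (Set.Icc (0:ℝ) 1)).withDensity
        (fun x => ENNReal.ofReal (2 / (1 + x) ^ 2))).map
      (fun x => if x ≤ 1 / 3 then 2 * x / (1 - x) else (1 - x) / (2 * x))
    = (volume.restrict (Set.Icc (0:ℝ) 1)).withDensity
        (fun x => ENNReal.ofReal (2 / (1 + x) ^ 2)) := by
  set μ : Measure ℝ := (volume.restrict (Set.Icc (0:ℝ) 1)).withDensity
        (fun x => ENNReal.ofReal (2 / (1 + x) ^ 2)) with hμ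
  set f : ℝ → ℝ := fun x => if x ≤ 1 / 3 then 2 * x / (1 - x) else (1 - x) / (2 * x) with hf
  have hfm : Measurable f := by
    apply Measurable.ite (measurableSet_le measurable_id measurable_const)
    · exact (measurable_const.mul measurable_id).div (measurable_const.sub measurable_id)
    · exact (measurable_const.sub measurable_id).div (measurable_const.mul measurable_id)
  have hf01 : ∀ x ∈ Icc (0:ℝ) 1, 0 ≤ f x ∧ f x ≤ 1 := by
    rintro x ⟨h0, h1⟩
    by_cases h : x ≤ 1/3
    · rw [hf]; simp only [if_pos h]
      constructor
      · exact div_nonneg (by linarith) (by linarith)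
      · rw [div_le_one (by linarith)]; linarith
    · push_neg at h
      rw [hf]; simp only [if_neg (not_le.mpr h)]
      constructor
      · exact div_nonneg (by linarith) (by linarith)
      · rw [div_le_one (by linarith)]; linarith
  have hprob : IsProbabilityMeasure μ := by
    constructor
    rw [mu_apply _ MeasurableSet.univ, univ_inter, key_lint 0 1 le_rfl zero_le_one]
    norm_num
  refine ⟨hprob, ?_⟩
  have hfin : IsFiniteMeasure (μ.map f) := by
    constructor
    rw [Measure.map_apply hfm MeasurableSet.univ, preimage_univ]
    exact measure_lt_top μ univ
  apply Measure.ext_of_Iic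
  intro t
  rw [Measure.map_apply hfm measurableSet_Iic,
    mu_apply _ (hfm measurableSet_Iic), mu_apply _ measurableSet_Iic]
  rcases lt_or_ge t 0 with ht | ht
  · have h1 : f ⁻¹' Iic t ∩ Icc (0:ℝ) 1 = ∅ := by
      rw [eq_empty_iff_forall_notMem]
      rintro x ⟨hx1, hx2⟩
      have := (hf01 x hx2).1
      simp only [mem_preimage, mem_Iic] at hx1
      linarith
    have h2 : Iic t ∩ Icc (0:ℝ) 1 = ∅ := by
      rw [eq_empty_iff_forall_notMem]
      rintro x ⟨hx1, hx2, _⟩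
      simp only [mem_Iic] at hx1
      linarith
    rw [h1, h2]
  rcases lt_or_ge t 1 with ht1 | ht1
  · -- main case 0 ≤ t < 1
    set A : ℝ := t / (2 + t) with hA
    set B : ℝ := 1 / (1 + 2 * t) with hB
    have hA0 : 0 ≤ A := div_nonneg ht (by linarith)
    have hA3 : A ≤ 1/3 := by rw [hA, div_le_iff₀ (by linarith)]; linarith
    have hB3 : 1/3 < B := by rw [hB, lt_div_iff₀ (by linarith)]; linarith
    have hB0 : 0 ≤ B := by linarith
    have hB1 : B ≤ 1 := by rw [hB, div_le_one (by linarith)]; linarith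
    have hpre : f ⁻¹' Iic t ∩ Icc (0:ℝ) 1 = Icc (0:ℝ) A ∪ Icc B 1 := by
      ext x
      simp only [mem_inter_iff, mem_preimage, mem_Iic, mem_Icc, mem_union, hf]
      constructor
      · rintro ⟨hfx, h0, h1⟩
        by_cases h : x ≤ 1/3
        · rw [if_pos h] at hfx
          left
          refine ⟨h0, ?_⟩
          rw [div_le_iff₀ (by linarith)] at hfx
          rw [hA, le_div_iff₀ (by linarith)]
          nlinarith
        · push_neg at h
          rw [if_neg (not_le.mpr h)] at hfx
          right
          refine ⟨?_, h1⟩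
          rw [div_le_iff₀ (by linarith)] at hfx
          rw [hB, div_le_iff₀ (by linarith)]
          nlinarith
      · rintro (⟨h0, hx⟩ | ⟨hx, h1⟩)
        · have hx3 : x ≤ 1/3 := le_trans hx hA3
          rw [if_pos hx3]
          refine ⟨?_, h0, by linarith⟩
          rw [hA, le_div_iff₀ (by linarith)] at hx
          rw [div_le_iff₀ (by linarith)]
          nlinarith
        · have hx3 : 1/3 < x := lt_of_lt_of_le hB3 hx
          rw [if_neg (not_le.mpr hx3)]
          refine ⟨?_, by linarith, h1⟩
          rw [hB, div_le_iff₀ (by linarith)] at hx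
          rw [div_le_iff₀ (by linarith)]
          nlinarith
    have hIic : Iic t ∩ Icc (0:ℝ) 1 = Icc (0:ℝ) t := by
      ext x
      simp only [mem_inter_iff, mem_Iic, mem_Icc]
      constructor
      · rintro ⟨h1, h2, _⟩; exact ⟨h2, h1⟩
      · rintro ⟨h1, h2⟩; exact ⟨h2, h1, by linarith⟩
    have hdisj : Disjoint (Icc (0:ℝ) A) (Icc B 1) := by
      rw [Set.disjoint_left]
      rintro x ⟨_, hx2⟩ ⟨hx3, _⟩
      linarith
    rw [hpre, hIic, lintegral_union measurableSet_Icc hdisj,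
      key_lint 0 A le_rfl hA0, key_lint B 1 hB0 hB1, key_lint 0 t le_rfl ht]
    have hn1 : (0:ℝ) ≤ 2 / (1 + 0) - 2 / (1 + A) := by
      have : 2 / (1 + A) ≤ 2 := by rw [div_le_iff₀ (by linarith)]; linarith
      norm_num; linarith
    have hn2 : (0:ℝ) ≤ 2 / (1 + B) - 2 / (1 + 1) := by
      have : 1 ≤ 2 / (1 + B) := by rw [le_div_iff₀ (by linarith)]; linarith
      norm_num; linarith
    rw [← ENNReal.ofReal_add hn1 hn2]
    congr 1
    have h2t : (2:ℝ) + t ≠ 0 := by linarith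
    have h12t : (1:ℝ) + 2 * t ≠ 0 := by linarith
    have h1t : (1:ℝ) + t ≠ 0 := by linarith
    rw [hA, hB]
    field_simp
    ring
  · -- t ≥ 1
    have hpre : f ⁻¹' Iic t ∩ Icc (0:ℝ) 1 = Icc (0:ℝ) 1 := by
      rw [inter_eq_right]
      intro x hx
      exact le_trans (hf01 x hx).2 ht1
    have hIic : Iic t ∩ Icc (0:ℝ) 1 = Icc (0:ℝ) 1 := by
      rw [inter_eq_right]
      rintro x ⟨_, hx2⟩
      exact le_trans hx2 ht1
    rw [hpre, hIic]
end

section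
/- The function h*(x) = 12(x − 1/2)² is an invariant probability density for the map f on [0,1] defined by f(x) = (1/8 + 2(x−1/2)³)^{1/3} + 1/2 for x ∈ [0, 1/2] and f(x) = (1/8 − 2(x−1/2)³)^{1/3} + 1/2 for x ∈ [1/2, 1]; that is, the measure dμ = 12(x−1/2)² dλ satisfies f_#μ = μ. -/
open MeasureTheory Set

/-- The real cube root. -/
noncomputable def cbrt (y : ℝ) : ℝ :=
  if 0 ≤ y then y ^ ((1:ℝ) / 3) else -((-y) ^ ((1:ℝ) / 3))

lemma cbrt_cube (y : ℝ) : cbrt y ^ 3 = y := by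
  unfold cbrt
  split_ifs with h
  · rw [← Real.rpow_natCast (y ^ ((1:ℝ)/3)) 3, ← Real.rpow_mul h]
    norm_num
  · push_neg at h
    have h' : (0:ℝ) ≤ -y := by linarith
    have h2 : (((-y) ^ ((1:ℝ)/3)) ^ 3 : ℝ) = -y := by
      rw [← Real.rpow_natCast ((-y) ^ ((1:ℝ)/3)) 3, ← Real.rpow_mul h']
      norm_num
    rw [Odd.neg_pow ⟨1, by norm_num⟩, h2, neg_neg]

lemma cube_strictMono : StrictMono fun a : ℝ => a ^ 3 :=
  Odd.strictMono_pow ⟨1, by norm_num⟩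

lemma le_cbrt_iff {a t : ℝ} : a ≤ cbrt t ↔ a ^ 3 ≤ t := by
  conv_rhs => rw [← cbrt_cube t]
  exact (cube_strictMono.le_iff_le).symm

lemma cbrt_le_iff {a t : ℝ} : cbrt t ≤ a ↔ t ≤ a ^ 3 := by
  conv_rhs => rw [← cbrt_cube t]
  exact (cube_strictMono.le_iff_le).symm

lemma cube_le_cube {a b : ℝ} (h : a ≤ b) : a ^ 3 ≤ b ^ 3 :=
  cube_strictMono.monotone h

lemma cube_le_cube_iff {a b : ℝ} : a ^ 3 ≤ b ^ 3 ↔ a ≤ b :=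
  cube_strictMono.le_iff_le

lemma measurable_cbrt : Measurable cbrt := by
  unfold cbrt
  apply Measurable.ite (measurableSet_le measurable_const measurable_id)
  · exact (Real.continuous_rpow_const (by norm_num)).measurable
  · exact ((Real.continuous_rpow_const (by norm_num)).measurable.comp measurable_neg).neg

noncomputable def f19 : ℝ → ℝ := fun x =>
  if x ≤ 1 / 2 then cbrt (1 / 8 + 2 * (x - 1 / 2) ^ 3) + 1 / 2
  else cbrt (1 / 8 - 2 * (x - 1 / 2) ^ 3) + 1 / 2

noncomputable def μ19 : Measure ℝ :=
  (volume.restrict (Set.Icc (0:ℝ) 1)).withDensity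
    (fun x => ENNReal.ofReal (12 * (x - 1 / 2) ^ 2))

lemma measurable_f19 : Measurable f19 := by
  unfold f19
  apply Measurable.ite (measurableSet_le measurable_id measurable_const)
  · exact ((measurable_cbrt.comp
      ((((measurable_id.sub measurable_const).pow_const 3).const_mul 2).const_add (1/8)))).add
      measurable_const
  · exact ((measurable_cbrt.comp
      (((((measurable_id.sub measurable_const).pow_const 3).const_mul 2).neg).const_add (1/8)))).add
      measurable_const

lemma f19_mem {x : ℝ} (hx : x ∈ Set.Icc (0:ℝ) 1) : f19 x ∈ Set.Icc (0:ℝ) 1 := by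
  obtain ⟨hx0, hx1⟩ := hx
  unfold f19
  split_ifs with h
  · constructor
    · have h1 : ((-(1/2):ℝ)) ^ 3 ≤ (x - 1/2) ^ 3 := cube_le_cube (by linarith)
      have h2 : (-(1/2):ℝ) ≤ cbrt (1/8 + 2*(x-1/2)^3) := le_cbrt_iff.2 (by norm_num at h1 ⊢; linarith)
      linarith
    · have h1 : (x - 1/2) ^ 3 ≤ ((0:ℝ)) ^ 3 := cube_le_cube (by linarith)
      have h2 : cbrt (1/8 + 2*(x-1/2)^3) ≤ 1/2 := cbrt_le_iff.2 (by norm_num at h1 ⊢; linarith)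
      linarith
  · push_neg at h
    constructor
    · have h1 : (x - 1/2) ^ 3 ≤ ((1/2:ℝ)) ^ 3 := cube_le_cube (by linarith)
      have h2 : (-(1/2):ℝ) ≤ cbrt (1/8 - 2*(x-1/2)^3) := le_cbrt_iff.2 (by norm_num at h1 ⊢; linarith)
      linarith
    · have h1 : ((0:ℝ)) ^ 3 ≤ (x - 1/2) ^ 3 := cube_le_cube (by linarith)
      have h2 : cbrt (1/8 - 2*(x-1/2)^3) ≤ 1/2 := cbrt_le_iff.2 (by norm_num at h1 ⊢; linarith)
      linarith

lemma key19 (b c : ℝ) (hbc : b ≤ c) :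
    ∫⁻ x in Set.Icc b c, ENNReal.ofReal (12 * (x - 1/2)^2) ∂(volume : Measure ℝ) =
      ENNReal.ofReal (4*(c-1/2)^3 - 4*(b-1/2)^3) := by
  have hcont : Continuous fun x : ℝ => 12 * (x - 1/2)^2 := by continuity
  rw [← ofReal_integral_eq_lintegral_ofReal]
  · congr 1
    rw [MeasureTheory.integral_Icc_eq_integral_Ioc, ← intervalIntegral.integral_of_le hbc]
    have hderiv : ∀ x ∈ Set.uIcc b c,
        HasDerivAt (fun x : ℝ => 4*(x-1/2)^3) (12*(x-1/2)^2) x := by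
      intro x _
      have h1 : HasDerivAt (fun x : ℝ => x - 1/2) 1 x := (hasDerivAt_id x).sub_const _
      have h2 := (h1.pow 3).const_mul (4:ℝ)
      refine h2.congr_deriv ?_
      rw [show (3:ℕ) - 1 = 2 from rfl]; push_cast; ring
    rw [intervalIntegral.integral_eq_sub_of_hasDerivAt hderiv (hcont.intervalIntegrable b c)]
  · exact hcont.integrableOn_Icc
  · exact Filter.Eventually.of_forall fun x => by positivity

lemma μ19_apply {s : Set ℝ} (hs : MeasurableSet s) :
    μ19 s = ∫⁻ x in s ∩ Set.Icc (0:ℝ) 1, ENNReal.ofReal (12 * (x - 1 / 2) ^ 2) ∂volume := by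
  rw [μ19, withDensity_apply _ hs, Measure.restrict_restrict hs]

lemma μ19_Icc {b c : ℝ} (h0 : 0 ≤ b) (hbc : b ≤ c) (hc : c ≤ 1) :
    μ19 (Set.Icc b c) = ENNReal.ofReal (4*(c-1/2)^3 - 4*(b-1/2)^3) := by
  rw [μ19_apply measurableSet_Icc, Set.Icc_inter_Icc,
    max_eq_left h0, min_eq_left hc]
  exact key19 b c hbc

lemma prob19 : IsProbabilityMeasure μ19 := by
  constructor
  rw [μ19_apply MeasurableSet.univ, Set.univ_inter, key19 0 1 (by norm_num)]
  norm_num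

set_option maxHeartbeats 2000000 in
theorem stmt19 :
    IsProbabilityMeasure
      ((volume.restrict (Set.Icc (0:ℝ) 1)).withDensity
        (fun x => ENNReal.ofReal (12 * (x - 1 / 2) ^ 2))) ∧
    ((volume.restrict (Set.Icc (0:ℝ) 1)).withDensity
        (fun x => ENNReal.ofReal (12 * (x - 1 / 2) ^ 2))).map
      (fun x => if x ≤ 1 / 2 then cbrt (1 / 8 + 2 * (x - 1 / 2) ^ 3) + 1 / 2
                else cbrt (1 / 8 - 2 * (x - 1 / 2) ^ 3) + 1 / 2)
    = (volume.restrict (Set.Icc (0:ℝ) 1)).withDensity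
        (fun x => ENNReal.ofReal (12 * (x - 1 / 2) ^ 2)) := by
  show IsProbabilityMeasure μ19 ∧ μ19.map f19 = μ19
  refine ⟨prob19, ?_⟩
  haveI := prob19
  haveI : IsProbabilityMeasure (μ19.map f19) :=
    Measure.isProbabilityMeasure_map measurable_f19.aemeasurable
  refine Measure.ext_of_Iic _ _ fun a => ?_
  rw [Measure.map_apply measurable_f19 measurableSet_Iic,
    μ19_apply (measurable_f19 measurableSet_Iic), μ19_apply measurableSet_Iic]
  rcases lt_or_ge a 0 with ha | ha
  · have h1 : f19 ⁻¹' Set.Iic a ∩ Set.Icc 0 1 = (∅ : Set ℝ) := by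
      apply Set.eq_empty_iff_forall_notMem.2
      rintro x ⟨hfa, hx⟩
      have hge := (f19_mem hx).1
      have hle : f19 x ≤ a := Set.mem_Iic.1 (Set.mem_preimage.1 hfa)
      linarith
    have h2 : Set.Iic a ∩ Set.Icc (0:ℝ) 1 = (∅ : Set ℝ) := by
      apply Set.eq_empty_iff_forall_notMem.2
      rintro x ⟨hxa, hx0, _⟩
      have : x ≤ a := Set.mem_Iic.1 hxa
      linarith
    rw [h1, h2]
  rcases le_or_gt a 1 with ha1 | ha1
  · -- main case 0 ≤ a ≤ 1
    set r : ℝ := cbrt ((1/8 - (a - 1/2)^3)/2) with hr_def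
    have hcube_lo : ((-(1/2):ℝ)) ^ 3 ≤ (a - 1/2) ^ 3 := cube_le_cube (by linarith)
    have hcube_hi : (a - 1/2) ^ 3 ≤ ((1/2:ℝ)) ^ 3 := cube_le_cube (by linarith)
    have hlo : (-(1/8):ℝ) ≤ (a - 1/2) ^ 3 := by norm_num at hcube_lo; linarith
    have hhi : (a - 1/2) ^ 3 ≤ (1/8:ℝ) := by norm_num at hcube_hi; linarith
    have hr3 : r ^ 3 = (1/8 - (a - 1/2)^3)/2 := cbrt_cube _
    have hr0 : 0 ≤ r := le_cbrt_iff.2 (by norm_num; linarith)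
    have hr2 : r ≤ 1/2 := cbrt_le_iff.2 (by norm_num; linarith)
    have hset : f19 ⁻¹' Set.Iic a ∩ Set.Icc 0 1
        = Set.Icc (0:ℝ) (1/2 - r) ∪ Set.Icc (1/2 + r) 1 := by
      ext x
      simp only [Set.mem_inter_iff, Set.mem_preimage, Set.mem_Iic, Set.mem_Icc, Set.mem_union]
      unfold f19
      constructor
      · rintro ⟨hfa, hx0, hx1⟩
        by_cases hx : x ≤ 1/2
        · rw [if_pos (by norm_num; exact hx)] at hfa
          left
          refine ⟨hx0, ?_⟩
          have h1 : 1/8 + 2*(x-1/2)^3 ≤ (a - 1/2)^3 := cbrt_le_iff.1 (by norm_num at hfa ⊢; linarith)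
          have h2 : (x - 1/2)^3 ≤ (-r)^3 := by
            have hnr : (-r)^3 = -(r^3) := by ring
            rw [hnr, hr3]; linarith
          have h3 := cube_le_cube_iff.1 h2
          linarith
        · push_neg at hx
          rw [if_neg (by norm_num; exact hx)] at hfa
          right
          refine ⟨?_, hx1⟩
          have h1 : 1/8 - 2*(x-1/2)^3 ≤ (a - 1/2)^3 := cbrt_le_iff.1 (by norm_num at hfa ⊢; linarith)
          have h2 : r^3 ≤ (x-1/2)^3 := by rw [hr3]; linarith
          have h3 := cube_le_cube_iff.1 h2
          linarith
      · rintro (⟨hx0, hx1⟩ | ⟨hx0, hx1⟩)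
        · have hx : x ≤ 1/2 := by linarith
          refine ⟨?_, hx0, by linarith⟩
          rw [if_pos (by norm_num; exact hx)]
          have h2 : (x - 1/2)^3 ≤ (-r)^3 := cube_le_cube (by linarith)
          have hnr : (-r)^3 = -(r^3) := by ring
          rw [hnr, hr3] at h2
          have h4 : cbrt (1/8 + 2*(x-1/2)^3) ≤ a - 1/2 := cbrt_le_iff.2 (by linarith)
          norm_num at h4 ⊢
          linarith
        · refine ⟨?_, by linarith, hx1⟩
          by_cases hx : x ≤ 1/2
          · have hrz : r = 0 := le_antisymm (by linarith) hr0
            have hxe : x = 1/2 := le_antisymm hx (by rw [hrz] at hx0; linarith)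
            have hs0 : (a - 1/2)^3 = 1/8 := by
              have := hr3
              rw [hrz] at this
              norm_num at this
              linarith
            rw [if_pos (by norm_num; exact hx)]
            have h4 : cbrt (1/8 + 2*(x-1/2)^3) ≤ a - 1/2 :=
              cbrt_le_iff.2 (by rw [hxe]; norm_num; linarith [hs0])
            norm_num at h4 ⊢
            linarith
          · push_neg at hx
            rw [if_neg (by norm_num; exact hx)]
            have h2 : r^3 ≤ (x-1/2)^3 := cube_le_cube (by linarith)
            rw [hr3] at h2
            have h4 : cbrt (1/8 - 2*(x-1/2)^3) ≤ a - 1/2 := cbrt_le_iff.2 (by linarith)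
            norm_num at h4 ⊢
            linarith
    have hIic : Set.Iic a ∩ Set.Icc (0:ℝ) 1 = Set.Icc 0 a := by
      ext x
      simp only [Set.mem_inter_iff, Set.mem_Iic, Set.mem_Icc]
      exact ⟨fun ⟨h1, h2, _⟩ => ⟨h2, h1⟩, fun ⟨h1, h2⟩ => ⟨h2, h1, le_trans h2 ha1⟩⟩
    rw [hset, hIic]
    have hν : ∀ s : Set ℝ, MeasurableSet s →
        ∫⁻ x in s, ENNReal.ofReal (12 * (x - 1/2)^2) ∂(volume : Measure ℝ)
        = (volume.withDensity fun x => ENNReal.ofReal (12 * (x - 1/2)^2)) s :=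
      fun s hs => (withDensity_apply _ hs).symm
    rw [hν _ ((measurableSet_Icc).union measurableSet_Icc), hν _ measurableSet_Icc]
    set ν := volume.withDensity fun x : ℝ => ENNReal.ofReal (12 * (x - 1/2)^2) with hν_def
    have hinter : ν (Set.Icc (0:ℝ) (1/2 - r) ∩ Set.Icc (1/2 + r) 1) = 0 := by
      apply measure_mono_null (t := Set.Icc ((1:ℝ)/2 + r) (1/2 - r))
      · rintro x ⟨⟨_, h1⟩, h2, _⟩
        exact ⟨h2, h1⟩
      · apply withDensity_absolutelyContinuous volume _
        rw [Real.volume_Icc]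
        apply ENNReal.ofReal_eq_zero.2
        linarith
    have hunion : ν (Set.Icc (0:ℝ) (1/2 - r) ∪ Set.Icc (1/2 + r) 1)
        = ν (Set.Icc (0:ℝ) (1/2 - r)) + ν (Set.Icc ((1:ℝ)/2 + r) 1) := by
      have h := measure_union_add_inter (μ := ν) (Set.Icc (0:ℝ) (1/2 - r))
        (measurableSet_Icc (a := (1:ℝ)/2 + r) (b := 1))
      rw [hinter, add_zero] at h
      exact h
    rw [hunion, ← hν _ measurableSet_Icc, ← hν _ measurableSet_Icc, ← hν _ measurableSet_Icc,
      key19 0 (1/2 - r) (by linarith), key19 (1/2 + r) 1 (by linarith),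
      key19 0 a ha]
    have e1 : 4*((1/2 - r)-1/2)^3 - 4*((0:ℝ)-1/2)^3 = 2*(a-1/2)^3 + 1/4 := by
      linear_combination (-4 : ℝ) * hr3
    have e2 : 4*((1:ℝ)-1/2)^3 - 4*((1/2 + r)-1/2)^3 = 2*(a-1/2)^3 + 1/4 := by
      linear_combination (-4 : ℝ) * hr3
    rw [e1, e2, ← ENNReal.ofReal_add (by linarith) (by linarith)]
    congr 1
    ring
  · -- a > 1
    have h1 : f19 ⁻¹' Set.Iic a ∩ Set.Icc 0 1 = Set.Icc (0:ℝ) 1 := by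
      ext x
      simp only [Set.mem_inter_iff, Set.mem_preimage, Set.mem_Iic, Set.mem_Icc]
      exact ⟨fun h => h.2, fun h => ⟨le_trans (f19_mem h).2 ha1.le, h⟩⟩
    have h2 : Set.Iic a ∩ Set.Icc (0:ℝ) 1 = Set.Icc (0:ℝ) 1 := by
      ext x
      simp only [Set.mem_inter_iff, Set.mem_Iic, Set.mem_Icc]
      exact ⟨fun h => h.2, fun h => ⟨le_trans h.2 ha1.le, h⟩⟩
    rw [h1, h2]
end
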